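/- Let G be a P_5-free and bull-free graph containing an induced house: vertices v_1,...,v_5 where v_1,v_2,v_3,v_4 induce a C_4 (edges v_1v_2, v_2v_3, v_3v_4, v_4v_1) and v_5 is adjacent exactly to v_2 and v_3. Then every vertex outside the house that has a neighbor in the house and also a neighbor in the anti-neighborhood of the house is adjacent to all five vertices of the house. -/

import Mathlib

open SimpleGraph

/-- The dart: vertices a,b,c,d,e = 0,1,2,3,4; edges ab, ac, ad, bd, cd, de. -/
def dartGraph : SimpleGraph (Fin 5) :=
  SimpleGraph.fromEdgeSet {s(0,1), s(0,2), s(0,3), s(1,3), s(2,3), s(3,4)}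

/-- The bull: vertices a,b,c,d,e = 0,1,2,3,4; edges ab, bc, cd, be, ce. -/
def bullGraph : SimpleGraph (Fin 5) :=
  SimpleGraph.fromEdgeSet {s(0,1), s(1,2), s(2,3), s(1,4), s(2,4)}

/-- The house: C4 on v1..v4 = 0..3 plus v5 = 4 adjacent to v2 = 1 and v3 = 2. -/
def houseGraph : SimpleGraph (Fin 5) :=
  SimpleGraph.fromEdgeSet {s(0,1), s(1,2), s(2,3), s(3,0), s(4,1), s(4,2)}

/-- Anti-neighborhood of a vertex: all vertices distinct from and nonadjacent to `v`. -/
def vertexAnti {V : Type*} (G : SimpleGraph V) (v : V) : Set V :=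
  {u | u ≠ v ∧ ¬ G.Adj v u}

/-- Anti-neighborhood of a set `S`: vertices outside `S` with no neighbor in `S`. -/
def antiNbhd {V : Type*} (G : SimpleGraph V) (S : Set V) : Set V :=
  {v | v ∉ S ∧ ∀ u ∈ S, ¬ G.Adj v u}

/-- Contact vertices of `S`: outside `S`, with a neighbor in `S` and a neighbor in `antiNbhd G S`. -/
def contactSet {V : Type*} (G : SimpleGraph V) (S : Set V) : Set V :=
  {v | v ∉ S ∧ (∃ u ∈ S, G.Adj v u) ∧ ∃ w ∈ antiNbhd G S, G.Adj v w}

/-- `G` has a clique cutset: a clique whose removal disconnects the graph. -/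
def HasCliqueCutset {V : Type*} (G : SimpleGraph V) : Prop :=
  ∃ C : Set V, G.IsClique C ∧ ¬ (G.induce Cᶜ).Preconnected

/-- `U` is a module: no outside vertex distinguishes two vertices of `U`. -/
def IsModule {V : Type*} (G : SimpleGraph V) (U : Set V) : Prop :=
  ∀ z ∉ U, (∀ x ∈ U, G.Adj z x) ∨ (∀ x ∈ U, ¬ G.Adj z x)

/-- `G` is prime: all its modules are trivial. -/
def IsPrime {V : Type*} (G : SimpleGraph V) : Prop :=
  ∀ U : Set V, IsModule G U → U = ∅ ∨ (∃ x, U = {x}) ∨ U = Set.univ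

/-- `G` is perfect: every induced subgraph has chromatic number equal to clique number. -/
def IsPerfect {V : Type*} (G : SimpleGraph V) : Prop :=
  ∀ s : Set V, (G.induce s).chromaticNumber = ((G.induce s).cliqueNum : ℕ∞)

/-- Distance from a vertex to a set of vertices. -/
noncomputable def setDist {V : Type*} (G : SimpleGraph V) (v : V) (S : Set V) : ℕ :=
  sInf {n | ∃ u ∈ S, n = G.dist v u}

lemma P5_of {V : Type*} (G : SimpleGraph V) (hP5 : IsEmpty (pathGraph 5 ↪g G)) (a b c d e : V)
    (hab : G.Adj a b) (hbc : G.Adj b c) (hcd : G.Adj c d) (hde : G.Adj d e)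
    (nac : ¬ G.Adj a c) (nad : ¬ G.Adj a d) (nae : ¬ G.Adj a e)
    (nbd : ¬ G.Adj b d) (nbe : ¬ G.Adj b e) (nce : ¬ G.Adj c e)
    (ac : a ≠ c) (ad : a ≠ d) (ae : a ≠ e) (bd : b ≠ d) (be : b ≠ e) (ce : c ≠ e) :
    False := by
  have hba := hab.symm; have hcb := hbc.symm; have hdc := hcd.symm; have hed := hde.symm
  have nca : ¬ G.Adj c a := fun h => nac h.symm
  have nda : ¬ G.Adj d a := fun h => nad h.symm
  have nea : ¬ G.Adj e a := fun h => nae h.symm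
  have ndb : ¬ G.Adj d b := fun h => nbd h.symm
  have neb : ¬ G.Adj e b := fun h => nbe h.symm
  have nec : ¬ G.Adj e c := fun h => nce h.symm
  have ca := ac.symm; have da := ad.symm; have ea := ae.symm
  have db := bd.symm; have eb := be.symm; have ec := ce.symm
  have ab := hab.ne; have ba := hba.ne; have bc := hbc.ne; have cb := hcb.ne
  have cd := hcd.ne; have dc := hdc.ne; have de := hde.ne; have ed := hed.ne
  have hirr : ∀ x, ¬ G.Adj x x := fun x h => G.irrefl h
  refine hP5.elim ⟨⟨![a,b,c,d,e], ?_⟩, ?_⟩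
  · intro i j h
    fin_cases i <;> fin_cases j <;> simp_all
  · intro i j
    fin_cases i <;> fin_cases j <;> simp [pathGraph_adj] <;>
      first
        | assumption
        | exact hirr _
        | exact iff_of_true (by assumption) (by decide)
        | exact iff_of_false (by assumption) (by decide)
        | exact iff_of_false (hirr _) (by decide)

lemma bull_of {V : Type*} (G : SimpleGraph V) (hbull : IsEmpty (bullGraph ↪g G)) (a b c d e : V)
    (hab : G.Adj a b) (hbc : G.Adj b c) (hcd : G.Adj c d) (hbe : G.Adj b e) (hce : G.Adj c e)
    (nac : ¬ G.Adj a c) (nad : ¬ G.Adj a d) (nae : ¬ G.Adj a e)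
    (nbd : ¬ G.Adj b d) (nde : ¬ G.Adj d e)
    (ac : a ≠ c) (ad : a ≠ d) (ae : a ≠ e) (bd : b ≠ d) (de : d ≠ e) :
    False := by
  have hba := hab.symm; have hcb := hbc.symm; have hdc := hcd.symm
  have heb := hbe.symm; have hec := hce.symm
  have nca : ¬ G.Adj c a := fun h => nac h.symm
  have nda : ¬ G.Adj d a := fun h => nad h.symm
  have nea : ¬ G.Adj e a := fun h => nae h.symm
  have ndb : ¬ G.Adj d b := fun h => nbd h.symm
  have ned : ¬ G.Adj e d := fun h => nde h.symm
  have ca := ac.symm; have da := ad.symm; have ea := ae.symm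
  have db := bd.symm; have ed := de.symm
  have ab := hab.ne; have ba := hba.ne; have bc := hbc.ne; have cb := hcb.ne
  have cd := hcd.ne; have dc := hdc.ne; have be := hbe.ne; have eb := heb.ne
  have ce := hce.ne; have ec := hec.ne
  have hirr : ∀ x, ¬ G.Adj x x := fun x h => G.irrefl h
  refine hbull.elim ⟨⟨![a,b,c,d,e], ?_⟩, ?_⟩
  · intro i j h
    fin_cases i <;> fin_cases j <;> simp_all
  · intro i j
    fin_cases i <;> fin_cases j <;> simp [bullGraph] <;>
      first
        | assumption
        | exact hirr _
        | exact iff_of_true (by assumption) (by decide)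
        | exact iff_of_false (by assumption) (by decide)
        | exact iff_of_false (hirr _) (by decide)

theorem stmt13 {V : Type*} [Fintype V] (G : SimpleGraph V)
    (hP5 : IsEmpty (pathGraph 5 ↪g G))
    (hbull : IsEmpty (bullGraph ↪g G))
    (f : houseGraph ↪g G)
    (u : V) (hu : u ∈ contactSet G (Set.range f)) :
    ∀ i : Fin 5, G.Adj u (f i) := by
  obtain ⟨hu1, ⟨x, hx, hux⟩, w, ⟨hw1, hw2⟩, huw⟩ := hu
  obtain ⟨i0, rfl⟩ := hx
  have hne_u : ∀ i : Fin 5, u ≠ f i := fun i h => hu1 ⟨i, h.symm⟩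
  have hne_w : ∀ i : Fin 5, w ≠ f i := fun i h => hw1 ⟨i, h.symm⟩
  have hwf : ∀ i : Fin 5, ¬ G.Adj w (f i) := fun i => hw2 (f i) ⟨i, rfl⟩
  have hmap : ∀ i j : Fin 5, houseGraph.Adj i j → G.Adj (f i) (f j) :=
    fun i j h => f.map_adj_iff.mpr h
  have hnmap : ∀ i j : Fin 5, ¬ houseGraph.Adj i j → ¬ G.Adj (f i) (f j) :=
    fun i j h hg => h (f.map_adj_iff.mp hg)
  have hfne : ∀ i j : Fin 5, i ≠ j → f i ≠ f j := fun i j h e => h (f.injective e)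
  have hwu : G.Adj w u := huw.symm
  -- toolA i j k : induced P3 i-j-k in house, u adj f i, not f j, not f k ⇒ P5 w,u,fi,fj,fk
  have toolA : ∀ i j k : Fin 5, houseGraph.Adj i j → houseGraph.Adj j k →
      ¬ houseGraph.Adj i k → i ≠ k →
      G.Adj u (f i) → ¬ G.Adj u (f j) → ¬ G.Adj u (f k) → False := by
    intro i j k hij hjk hik hikne hAi hAj hAk
    exact P5_of G hP5 w u (f i) (f j) (f k) hwu hAi (hmap i j hij) (hmap j k hjk)
      (hwf i) (hwf j) (hwf k) hAj hAk (hnmap i k hik)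
      (hne_w i) (hne_w j) (hne_w k) (hne_u j) (hne_u k) (hfne i k hikne)
  -- toolB i j k : edge ij with u adj both; k adj i, not j, u not adj f k ⇒ bull w,u,fi,fk,fj
  have toolB : ∀ i j k : Fin 5, houseGraph.Adj i j → houseGraph.Adj k i →
      ¬ houseGraph.Adj k j → k ≠ j →
      G.Adj u (f i) → G.Adj u (f j) → ¬ G.Adj u (f k) → False := by
    intro i j k hij hki hkj hkjne hAi hAj hAk
    exact bull_of G hbull w u (f i) (f k) (f j) hwu hAi (hmap i k (hki.symm))
      hAj (hmap i j hij) (hwf i) (hwf k) (hwf j) hAk (hnmap k j hkj)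
      (hne_w i) (hne_w k) (hne_w j) (hne_u k) (hfne k j hkjne)
  have H01 : houseGraph.Adj 0 1 := by simp [houseGraph]
  have H12 : houseGraph.Adj 1 2 := by simp [houseGraph]
  have H23 : houseGraph.Adj 2 3 := by simp [houseGraph]
  have H30 : houseGraph.Adj 3 0 := by simp [houseGraph]
  have H41 : houseGraph.Adj 4 1 := by simp [houseGraph]
  have H42 : houseGraph.Adj 4 2 := by simp [houseGraph]
  have H10 := H01.symm; have H21 := H12.symm; have H32 := H23.symm
  have H03 := H30.symm; have H14 := H41.symm; have H24 := H42.symm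
  have N02 : ¬ houseGraph.Adj 0 2 := by simp [houseGraph]
  have N04 : ¬ houseGraph.Adj 0 4 := by simp [houseGraph]
  have N13 : ¬ houseGraph.Adj 1 3 := by simp [houseGraph]
  have N34 : ¬ houseGraph.Adj 3 4 := by simp [houseGraph]
  have N20 : ¬ houseGraph.Adj 2 0 := fun h => N02 h.symm
  have N40 : ¬ houseGraph.Adj 4 0 := fun h => N04 h.symm
  have N31 : ¬ houseGraph.Adj 3 1 := fun h => N13 h.symm
  have N43 : ¬ houseGraph.Adj 4 3 := fun h => N34 h.symm
  by_cases h0 : G.Adj u (f 0) <;> by_cases h1 : G.Adj u (f 1) <;>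
    by_cases h2 : G.Adj u (f 2) <;> by_cases h3 : G.Adj u (f 3) <;>
    by_cases h4 : G.Adj u (f 4) <;>
    first
      | (intro i; fin_cases i <;> assumption)
      | exact absurd (toolB 1 0 4 H10 H41 N40 (by decide) h1 h0 h4) not_false
      | exact absurd (toolB 0 1 3 H01 H30 N31 (by decide) h0 h1 h3) not_false
      | exact absurd (toolB 1 0 2 H10 H21 N20 (by decide) h1 h0 h2) not_false
      | exact absurd (toolB 0 3 1 H03 H10 N13 (by decide) h0 h3 h1) not_false
      | exact absurd (toolB 2 4 3 H24 H32 N34 (by decide) h2 h4 h3) not_false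
      | exact absurd (toolB 1 2 0 H12 H01 N02 (by decide) h1 h2 h0) not_false
      | exact absurd (toolB 1 4 0 H14 H01 N04 (by decide) h1 h4 h0) not_false
      | exact absurd (toolB 2 3 1 H23 H12 N13 (by decide) h2 h3 h1) not_false
      | exact absurd (toolA 0 1 4 H01 H14 N04 (by decide) h0 h1 h4) not_false
      | exact absurd (toolA 0 3 2 H03 H32 N02 (by decide) h0 h3 h2) not_false
      | exact absurd (toolA 0 1 2 H01 H12 N02 (by decide) h0 h1 h2) not_false
      | exact absurd (toolA 3 2 4 H32 H24 N34 (by decide) h3 h2 h4) not_false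
      | exact absurd (toolA 1 0 3 H10 H03 N13 (by decide) h1 h0 h3) not_false
      | exact absurd (toolA 2 1 0 H21 H10 N20 (by decide) h2 h1 h0) not_false
      | exact absurd (toolA 4 1 0 H41 H10 N40 (by decide) h4 h1 h0) not_false
      | exact absurd (toolA 3 0 1 H30 H01 N31 (by decide) h3 h0 h1) not_false
      | exact absurd hux (by fin_cases i0 <;> first | exact h0 | exact h1 | exact h2 | exact h3 | exact h4)
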